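/- For any simple graph G and integers r, s with 1 ≤ r ≤ s and r dividing s, we have λ_r(G)/r ≥ λ_s(G)/s, i.e., s·λ_r(G) ≥ r·λ_s(G). -/
import Mathlib


open SimpleGraph

/-- `c` properly colors each vertex of `S` from its list `L`. -/
def IsPartialListColoring {V : Type*} (G : SimpleGraph V) (L : V → Finset ℕ)
    (S : Set V) (c : V → ℕ) : Prop :=
  (∀ v ∈ S, c v ∈ L v) ∧ ∀ u ∈ S, ∀ v ∈ S, G.Adj u v → c u ≠ c v

/-- `λ_L(G)`: the maximum number of vertices properly colorable from the lists of `L`. -/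
noncomputable def lamL {V : Type*} (G : SimpleGraph V) (L : V → Finset ℕ) : ℕ :=
  sSup {k | ∃ (S : Finset V) (c : V → ℕ), S.card = k ∧ IsPartialListColoring G L S c}

/-- `λ_t(G)`: the minimum of `λ_L(G)` over all `t`-list assignments `L`. -/
noncomputable def lam {V : Type*} (G : SimpleGraph V) (t : ℕ) : ℕ :=
  sInf {m | ∃ L : V → Finset ℕ, (∀ v, (L v).card = t) ∧ lamL G L = m}

/-- `G` admits a full proper coloring from the lists of `L`. -/
def ListColorable {V : Type*} (G : SimpleGraph V) (L : V → Finset ℕ) : Prop :=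
  ∃ c : V → ℕ, (∀ v, c v ∈ L v) ∧ ∀ u v, G.Adj u v → c u ≠ c v

/-- The list chromatic number of `G`. -/
noncomputable def listChromaticNumber {V : Type*} (G : SimpleGraph V) : ℕ :=
  sInf {k | ∀ L : V → Finset ℕ, (∀ v, (L v).card = k) → ListColorable G L}

lemma lamL_bddAbove {V : Type*} [Fintype V] (G : SimpleGraph V) (L : V → Finset ℕ) :
    BddAbove {k | ∃ (S : Finset V) (c : V → ℕ), S.card = k ∧ IsPartialListColoring G L S c} := by
  refine ⟨Fintype.card V, ?_⟩
  rintro k ⟨S, c, hS, -⟩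
  exact hS ▸ S.card_le_univ

lemma card_le_lamL {V : Type*} [Fintype V] (G : SimpleGraph V) (L : V → Finset ℕ)
    (S : Finset V) (c : V → ℕ) (h : IsPartialListColoring G L S c) :
    S.card ≤ lamL G L :=
  le_csSup (lamL_bddAbove G L) ⟨S, c, rfl, h⟩

theorem lam_div_monotone {V : Type*} [Fintype V] (G : SimpleGraph V)
    (r s : ℕ) (hr : 1 ≤ r) (hrs : r ≤ s) (hdvd : r ∣ s) :
    r * lam G s ≤ s * lam G r := by
  obtain ⟨m, hs⟩ := hdvd
  have hm : 1 ≤ m := by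
    rcases Nat.eq_zero_or_pos m with h | h
    · subst h; omega
    · exact h
  have hmpos : 0 < m := hm
  -- the set defining lam G r is nonempty, so it is attained
  have hne : {n | ∃ L : V → Finset ℕ, (∀ v, (L v).card = r) ∧ lamL G L = n}.Nonempty :=
    ⟨lamL G (fun _ => Finset.range r), fun _ => Finset.range r, fun _ => Finset.card_range r, rfl⟩
  obtain ⟨L, hLcard, hLval⟩ := Nat.sInf_mem hne
  -- construct the s-list assignment
  set L' : V → Finset ℕ := fun v => ((L v) ×ˢ Finset.range m).image (fun p => m * p.1 + p.2)
    with hL'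
  have hL'card : ∀ v, (L' v).card = s := by
    intro v
    rw [hL']
    have : (((L v) ×ˢ Finset.range m).image (fun p => m * p.1 + p.2)).card
        = ((L v) ×ˢ Finset.range m).card := by
      apply Finset.card_image_of_injOn
      rintro ⟨x, i⟩ hx ⟨y, j⟩ hy hxy
      simp only [Finset.coe_product, Set.mem_prod, Finset.mem_coe, Finset.mem_range] at hx hy
      have hxy' : m * x + i = m * y + j := hxy
      have e1 : (m * x + i) / m = x + i / m := Nat.mul_add_div hmpos x i
      have e2 : (m * y + j) / m = y + j / m := Nat.mul_add_div hmpos y j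
      have hi : i / m = 0 := Nat.div_eq_of_lt hx.2
      have hj : j / m = 0 := Nat.div_eq_of_lt hy.2
      clear hxy
      have hx2 : (m * x + i) / m = x := by rw [e1, hi, Nat.add_zero]
      have hy2 : (m * y + j) / m = y := by rw [e2, hj, Nat.add_zero]
      have h1 : x = y := by rw [← hx2, hxy', hy2]
      subst h1
      have h2 : i = j := Nat.add_left_cancel hxy'
      simp [h2]
    rw [this, Finset.card_product, Finset.card_range, hLcard, hs]
  -- bound lamL G L'
  have key : lamL G L' ≤ m * lamL G L := by
    apply csSup_le
    · exact ⟨0, ∅, fun _ => 0, Finset.card_empty, by simp, by simp⟩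
    · rintro k ⟨S, c, hS, hc1, hc2⟩
      -- split S by residue of c v mod m
      have hsum : S.card = ∑ i ∈ Finset.range m, (S.filter (fun v => c v % m = i)).card := by
        apply Finset.card_eq_sum_card_fiberwise
        intro x _
        exact Finset.mem_range.2 (Nat.mod_lt _ hmpos)
      have hbound : ∀ i ∈ Finset.range m,
          (S.filter (fun v => c v % m = i)).card ≤ lamL G L := by
        intro i _
        apply card_le_lamL G L _ (fun v => c v / m)
        constructor
        · intro v hv
          simp only [Finset.coe_filter, Set.mem_setOf_eq] at hv
          have := hc1 v hv.1
          rw [hL'] at this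
          simp only [Finset.mem_image, Finset.mem_product, Finset.mem_range] at this
          obtain ⟨⟨x, j⟩, ⟨hx, hj⟩, hxy⟩ := this
          have hxy' : m * x + j = c v := hxy
          have e1 : (m * x + j) / m = x + j / m := Nat.mul_add_div hmpos x j
          have e2 : j / m = 0 := Nat.div_eq_of_lt hj
          clear hxy
          have hcv : c v / m = x := by rw [← hxy', e1, e2, Nat.add_zero]
          show c v / m ∈ L v
          rwa [hcv]
        · intro u hu v hv hadj
          simp only [Finset.coe_filter, Set.mem_setOf_eq] at hu hv
          have hne' := hc2 u hu.1 v hv.1 hadj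
          have h1 := Nat.div_add_mod (c u) m
          have h2 := Nat.div_add_mod (c v) m
          intro heq
          have heq' : c u / m = c v / m := heq
          apply hne'
          rw [← h1, ← h2, heq', hu.2, hv.2]
      rw [← hS]
      calc S.card = _ := hsum
        _ ≤ ∑ _i ∈ Finset.range m, lamL G L := Finset.sum_le_sum hbound
        _ = m * lamL G L := by simp [Finset.sum_const, mul_comm]
  have hls : lam G s ≤ lamL G L' := Nat.sInf_le ⟨L', hL'card, rfl⟩
  calc r * lam G s ≤ r * (m * lamL G L) := Nat.mul_le_mul_left r (hls.trans key)
    _ = s * lamL G L := by rw [hs]; ring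
    _ = s * lam G r := by rw [hLval]; rfl
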